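/- For every positive integer d there exists a positive integer n₀ such that for every n ≥ n₀ and every indexed family B_1, …, B_n of axis-parallel boxes in ℝ^d with B_j ∩ B_k ≠ ∅ for all j, k ∈ {1,…,n}, there exist pairwise distinct indices i_1, …, i_{d+1} ∈ {1,…,n} such that B_{i_d} ∩ B_{i_{d+1}} = B_{i_1} ∩ B_{i_2} ∩ ⋯ ∩ B_{i_{d+1}}. -/

import Mathlib

/-- An axis-parallel box in `ℝ^d`: a product of closed intervals `[aᵢ, bᵢ]` with `aᵢ ≤ bᵢ`. -/
def IsBox {d : ℕ} (B : Set (Fin d → ℝ)) : Prop :=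
  ∃ a b : Fin d → ℝ, (∀ i, a i ≤ b i) ∧ B = Set.Icc a b


noncomputable def lisLen (f : ℕ → ℝ) : ℕ → ℕ
  | i => 1 + (((Finset.range i).filter fun j => f j ≤ f i).attach.sup
      fun j => lisLen f j.1)
  decreasing_by exact Finset.mem_range.1 (Finset.mem_filter.1 j.2).1

lemma lisLen_pos (f : ℕ → ℝ) (i : ℕ) : 1 ≤ lisLen f i := by
  rw [lisLen]; omega

lemma lisLen_lt (f : ℕ → ℝ) {i j : ℕ} (hji : j < i) (hf : f j ≤ f i) :
    lisLen f j < lisLen f i := by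
  conv_rhs => rw [lisLen]
  have hmem : j ∈ (Finset.range i).filter fun j => f j ≤ f i := by
    simp [Finset.mem_filter, Finset.mem_range, hji, hf]
  have h2 := Finset.le_sup (f := fun j : {x // x ∈ (Finset.range i).filter fun j => f j ≤ f i} => lisLen f j.1) (Finset.mem_attach _ ⟨j, hmem⟩)
  simp only [] at h2
  omega

lemma lisLen_chain (f : ℕ → ℝ) (i : ℕ) :
    ∃ l : List ℕ, l.length = lisLen f i ∧ l.Chain' (· < ·) ∧
      l.Chain' (fun a b => f a ≤ f b) ∧ ∃ h : l ≠ [], l.getLast h = i ∧ ∀ x ∈ l, x ≤ i := by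
  induction i using Nat.strong_induction_on with
  | _ i IH =>
  rcases eq_or_ne ((Finset.range i).filter fun j => f j ≤ f i) ∅ with he | hne
  · refine ⟨[i], ?_, List.isChain_singleton _, List.isChain_singleton _, by simp, by simp, by simp⟩
    rw [lisLen, he]; simp
  · have hne' : ((Finset.range i).filter fun j => f j ≤ f i).attach.Nonempty := by
      rw [Finset.attach_nonempty_iff]
      exact Finset.nonempty_iff_ne_empty.2 hne
    obtain ⟨⟨j, hj⟩, _, hsup⟩ := Finset.exists_mem_eq_sup _ hne'
      (fun j : {x // x ∈ (Finset.range i).filter fun j => f j ≤ f i} => lisLen f j.1)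
    have hji : j < i := Finset.mem_range.1 (Finset.mem_filter.1 hj).1
    have hfj : f j ≤ f i := (Finset.mem_filter.1 hj).2
    obtain ⟨l, hlen, hc1, hc2, hnil, hlast, hle⟩ := IH j hji
    refine ⟨l ++ [i], ?_, ?_, ?_, by simp, ?_, ?_⟩
    · rw [List.length_append, hlen]
      conv_rhs => rw [lisLen]
      simp [← hsup, Nat.add_comm]
    · unfold List.Chain'; rw [List.isChain_append]
      refine ⟨hc1, by simp, ?_⟩
      intro x hx y hy
      rw [List.getLast?_eq_getLast hnil] at hx
      simp at hx hy
      subst hx; subst hy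
      rw [hlast]; exact hji
    · unfold List.Chain'; rw [List.isChain_append]
      refine ⟨hc2, by simp, ?_⟩
      intro x hx y hy
      rw [List.getLast?_eq_getLast hnil] at hx
      simp at hx hy
      subst hx; subst hy
      rw [hlast]; exact hfj
    · simp
    · intro x hx
      rcases List.mem_append.1 hx with h | h
      · exact le_of_lt (lt_of_le_of_lt (hle x h) hji)
      · simp at h; omega

lemma es (m N : ℕ) (hN : m * m + 1 ≤ N) (f : ℕ → ℝ) :
    ∃ g : Fin (m + 1) → ℕ, StrictMono g ∧ (∀ t, g t < N) ∧
      (Monotone (f ∘ g) ∨ Antitone (f ∘ g)) := by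
  by_cases hA : ∃ i < N, m + 1 ≤ lisLen f i
  · obtain ⟨i, hiN, hm⟩ := hA
    obtain ⟨l, hlen, hc1, hc2, hnil, hlast, hle⟩ := lisLen_chain f i
    have hlt : ∀ t : Fin (m + 1), (t : ℕ) < l.length := fun t => by
      have := t.isLt; omega
    set g : Fin (m + 1) → ℕ := fun t => l.get ⟨t, hlt t⟩ with hg
    haveI : IsTrans ℕ (· < ·) := ⟨fun _ _ _ => Nat.lt_trans⟩
    have hp1 : l.Pairwise (· < ·) := List.isChain_iff_pairwise.1 hc1
    haveI : IsTrans ℕ fun a b => f a ≤ f b := ⟨fun _ _ _ => le_trans⟩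
    have hp2 : l.Pairwise (fun a b => f a ≤ f b) := List.isChain_iff_pairwise.1 hc2
    have hgm : StrictMono g := by
      intro s t hst
      exact List.pairwise_iff_get.1 hp1 ⟨s, hlt s⟩ ⟨t, hlt t⟩ hst
    refine ⟨g, hgm, fun t => ?_, Or.inl ?_⟩
    · exact lt_of_le_of_lt (hle _ (List.get_mem l _)) hiN
    · intro s t hst
      rcases eq_or_lt_of_le hst with h | h
      · rw [h]
      · exact List.pairwise_iff_get.1 hp2 ⟨s, hlt s⟩ ⟨t, hlt t⟩ h
  · push_neg at hA
    have hmaps : ∀ i ∈ Finset.range N, lisLen f i ∈ Finset.Icc 1 m := by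
      intro i hi
      rw [Finset.mem_range] at hi
      have := hA i hi
      have := lisLen_pos f i
      rw [Finset.mem_Icc]; omega
    have hcard : (Finset.Icc 1 m).card * m < (Finset.range N).card := by
      rw [Nat.card_Icc, Finset.card_range, Nat.add_sub_cancel]; omega
    obtain ⟨v, _, hv⟩ := Finset.exists_lt_card_fiber_of_mul_lt_card_of_maps_to hmaps hcard
    set s := (Finset.range N).filter fun i => lisLen f i = v with hs
    have hsc : m + 1 ≤ s.card := hv
    set g : Fin (m + 1) → ℕ := fun t => s.orderEmbOfFin rfl (Fin.castLE hsc t) with hg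
    have hmem : ∀ t, g t ∈ s := fun t => s.orderEmbOfFin_mem rfl _
    have hgm : StrictMono g :=
      fun a b hab => (s.orderEmbOfFin rfl).strictMono (by simpa using hab)
    refine ⟨g, hgm, fun t => ?_, Or.inr ?_⟩
    · have := hmem t; rw [hs, Finset.mem_filter, Finset.mem_range] at this
      exact this.1
    · intro a b hab
      rcases eq_or_lt_of_le hab with h | h
      · rw [h]
      · have hlt : g a < g b := hgm h
        have ha := hmem a; have hb := hmem b
        rw [hs, Finset.mem_filter] at ha hb
        by_contra hcon
        push_neg at hcon
        have := lisLen_lt f hlt (le_of_lt hcon)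
        omega

lemma multiES (k m : ℕ) : ∃ N : ℕ, 0 < N ∧ ∀ F : Fin k → ℕ → ℝ,
    ∃ g : Fin (m + 1) → ℕ, StrictMono g ∧ (∀ t, g t < N) ∧
      ∀ t, Monotone (F t ∘ g) ∨ Antitone (F t ∘ g) := by
  induction k with
  | zero =>
    exact ⟨m + 1, Nat.succ_pos _, fun F =>
      ⟨fun t => t.val, fun a b hab => hab, fun t => t.isLt, fun t => t.elim0⟩⟩
  | succ k IH =>
    obtain ⟨N', hN'pos, hIH⟩ := IH
    refine ⟨(N' - 1) * (N' - 1) + 1, Nat.succ_pos _, fun F => ?_⟩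
    obtain ⟨g₀, hg₀m, hg₀b, hg₀mono⟩ :=
      es (N' - 1) ((N' - 1) * (N' - 1) + 1) le_rfl (F (Fin.last k))
    have hN1 : N' - 1 + 1 = N' := Nat.succ_pred_eq_of_pos hN'pos
    -- reindex g₀ as defined on all of ℕ
    set G₀ : ℕ → ℕ := fun j => if h : j < N' - 1 + 1 then g₀ ⟨j, h⟩ else 0 with hG₀
    obtain ⟨g₁, hg₁m, hg₁b, hg₁mono⟩ := hIH fun t j => F t.castSucc (G₀ j)
    have hg₁b' : ∀ t, g₁ t < N' - 1 + 1 := fun t => by have := hg₁b t; omega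
    refine ⟨fun t => g₀ ⟨g₁ t, hg₁b' t⟩, ?_, ?_, ?_⟩
    · intro a b hab
      exact hg₀m (show (⟨g₁ a, hg₁b' a⟩ : Fin _) < ⟨g₁ b, hg₁b' b⟩ from hg₁m hab)
    · intro t; exact hg₀b _
    · intro t
      refine Fin.lastCases ?_ ?_ t
      · have hmono : StrictMono fun t : Fin (m+1) => (⟨g₁ t, hg₁b' t⟩ : Fin (N' - 1 + 1)) :=
          fun a b hab => hg₁m hab
        rcases hg₀mono with h | h
        · exact Or.inl (h.comp hmono.monotone)
        · exact Or.inr (h.comp_monotone hmono.monotone)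
      · intro t'
        have heq : (F t'.castSucc ∘ fun t => g₀ ⟨g₁ t, hg₁b' t⟩) =
            ((fun j => F t'.castSucc (G₀ j)) ∘ g₁) := by
          funext s
          simp only [Function.comp, hG₀, hg₁b' s, dif_pos]
        rw [heq]
        exact hg₁mono t'

theorem pairwise_intersecting_boxes_last_pair_intersection (d : ℕ) (hd : 0 < d) :
    ∃ n₀ : ℕ, 0 < n₀ ∧ ∀ n : ℕ, n₀ ≤ n → ∀ B : Fin n → Set (Fin d → ℝ),
      (∀ j, IsBox (B j)) → (∀ j k, (B j ∩ B k).Nonempty) →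
      ∃ i : Fin (d + 1) → Fin n, Function.Injective i ∧
        B (i ⟨d - 1, by omega⟩) ∩ B (i ⟨d, by omega⟩) = ⋂ t, B (i t) := by
  obtain ⟨N, hNpos, hN⟩ := multiES (2 * d) d
  refine ⟨N, hNpos, fun n hn B hbox _ => ?_⟩
  choose a b hab hB using hbox
  set F : Fin (2 * d) → ℕ → ℝ := fun s j =>
    if hj : j < n then
      (if hs : (s : ℕ) < d then a ⟨j, hj⟩ ⟨s, hs⟩
       else b ⟨j, hj⟩ ⟨(s : ℕ) - d, by have := s.isLt; omega⟩)
    else 0 with hF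
  obtain ⟨g, hgm, hgb, hgmono⟩ := hN F
  have hgn : ∀ t, g t < n := fun t => lt_of_lt_of_le (hgb t) hn
  set G : Fin (d + 1) → Fin n := fun t => ⟨g t, hgn t⟩ with hG
  have hFa : ∀ (i : Fin d) (t : Fin (d + 1)),
      F ⟨i, by omega⟩ (g t) = a (G t) i := by
    intro i t
    simp [hF, hgn t, i.isLt, hG]
  have hFb : ∀ (i : Fin d) (t : Fin (d + 1)),
      F ⟨d + i, by have := i.isLt; omega⟩ (g t) = b (G t) i := by
    intro i t
    have h1 : ¬ (d + (i : ℕ) < d) := by omega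
    have h2 : d + (i : ℕ) - d = (i : ℕ) := by omega
    simp [hF, hgn t, h1, h2, hG]
  have key : ∀ t : Fin (d + 1), B (G 0) ∩ B (G (Fin.last d)) ⊆ B (G t) := by
    intro t x hx
    obtain ⟨hx0, hxl⟩ := hx
    rw [hB, Set.mem_Icc] at hx0 hxl
    rw [hB, Set.mem_Icc]
    obtain ⟨h00, h01⟩ := hx0
    obtain ⟨hl0, hl1⟩ := hxl
    rw [Pi.le_def] at h00 h01 hl0 hl1
    refine ⟨?_, ?_⟩ <;> rw [Pi.le_def] <;> intro i
    · rcases hgmono ⟨i, by omega⟩ with h | h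
      · calc a (G t) i = F ⟨i, by omega⟩ (g t) := (hFa i t).symm
          _ ≤ F ⟨i, by omega⟩ (g (Fin.last d)) := h (Fin.le_last t)
          _ = a (G (Fin.last d)) i := hFa i (Fin.last d)
          _ ≤ x i := hl0 i
      · calc a (G t) i = F ⟨i, by omega⟩ (g t) := (hFa i t).symm
          _ ≤ F ⟨i, by omega⟩ (g 0) := h (Fin.zero_le t)
          _ = a (G 0) i := hFa i 0
          _ ≤ x i := h00 i
    · rcases hgmono ⟨d + i, by have := i.isLt; omega⟩ with h | h
      · calc x i ≤ b (G 0) i := h01 i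
          _ = F ⟨d + i, by have := i.isLt; omega⟩ (g 0) := (hFb i 0).symm
          _ ≤ F ⟨d + i, by have := i.isLt; omega⟩ (g t) := h (Fin.zero_le t)
          _ = b (G t) i := hFb i t
      · calc x i ≤ b (G (Fin.last d)) i := hl1 i
          _ = F ⟨d + i, by have := i.isLt; omega⟩ (g (Fin.last d)) := (hFb i (Fin.last d)).symm
          _ ≤ F ⟨d + i, by have := i.isLt; omega⟩ (g t) := h (Fin.le_last t)
          _ = b (G t) i := hFb i t
  have hGinj : Function.Injective G := by
    intro s t hst
    have : g s = g t := congrArg Fin.val hst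
    exact hgm.injective this
  set p : Fin (d + 1) := ⟨d - 1, by omega⟩ with hp
  refine ⟨G ∘ (Equiv.swap 0 p), hGinj.comp (Equiv.swap 0 p).injective, ?_⟩
  have e1 : (G ∘ (Equiv.swap 0 p)) ⟨d - 1, by omega⟩ = G 0 := by
    simp only [Function.comp]
    rw [show (⟨d - 1, by omega⟩ : Fin (d + 1)) = p from rfl, Equiv.swap_apply_right]
  have e2 : (G ∘ (Equiv.swap 0 p)) ⟨d, by omega⟩ = G (Fin.last d) := by
    simp only [Function.comp]
    rw [Equiv.swap_apply_of_ne_of_ne]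
    · rfl
    · exact Fin.ne_of_val_ne (by simpa using hd.ne')
    · exact Fin.ne_of_val_ne (by simp [hp]; omega)
  rw [e1, e2]
  apply Set.Subset.antisymm
  · exact Set.subset_iInter fun t => key _
  · refine Set.subset_inter ?_ ?_
    · have := Set.iInter_subset (fun t => B ((G ∘ (Equiv.swap 0 p)) t)) (Equiv.swap 0 p 0)
      simpa using this
    · have h := Set.iInter_subset (fun t => B ((G ∘ (Equiv.swap 0 p)) t)) ((Equiv.swap 0 p).symm (Fin.last d))
      simp only [Function.comp, Equiv.apply_symm_apply] at h
      exact h
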